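/- For all t ∈ [0, T], one has e^{(2/α)·A(t)} = e^{−ω(T−t)}·(1 + u)/(1 + u·e^{−2ω(T−t)}). -/

import Mathlib

/-- For all `t ∈ [0, T]`, one has
`e^{(2/α)·A(t)} = e^{−ω(T−t)}·(1 + u)/(1 + u·e^{−2ω(T−t)})`. -/
theorem stmt_5 (α β γ T : ℝ) (hα : 0 < α) (hβ : 0 < β) (hγ : 0 < γ) (hT : 0 < T)
    (ω u : ℝ) (hω : ω = Real.sqrt (β / α))
    (hu : u = (Real.sqrt (α * β) - γ) / (Real.sqrt (α * β) + γ))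
    (y : ℝ → ℝ)
    (hy : ∀ t, y t = (Real.sqrt (α * β) / 2) *
      (1 - u * Real.exp (-2 * ω * (T - t))) / (1 + u * Real.exp (-2 * ω * (T - t))))
    (A : ℝ → ℝ) (hA : ∀ t, A t = -∫ s in t..T, y s) :
    ∀ t ∈ Set.Icc (0 : ℝ) T,
      Real.exp ((2 / α) * A t) =
        Real.exp (-ω * (T - t)) * (1 + u) / (1 + u * Real.exp (-2 * ω * (T - t))) := by
  intro t ht
  obtain ⟨ht0, htT⟩ := ht
  have hs : (0:ℝ) < Real.sqrt (α * β) := Real.sqrt_pos.2 (by positivity)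
  have hωpos : 0 < ω := hω ▸ Real.sqrt_pos.2 (by positivity)
  have hαω : Real.sqrt (α * β) = α * ω := by
    rw [hω, show α * β = α ^ 2 * (β / α) by field_simp,
      Real.sqrt_mul (by positivity), Real.sqrt_sq hα.le]
  have h1u : 0 < 1 + u := by
    have : 1 + u = 2 * Real.sqrt (α * β) / (Real.sqrt (α * β) + γ) := by
      rw [hu]; field_simp; ring
    rw [this]; positivity
  have hu1 : u < 1 := by
    have h2 : 0 < 1 - u := by
      have : 1 - u = 2 * γ / (Real.sqrt (α * β) + γ) := by
        rw [hu]; field_simp; ring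
      rw [this]; positivity
    linarith
  have hpos : ∀ s, s ≤ T → 0 < 1 + u * Real.exp (-2 * ω * (T - s)) := by
    intro s hsT
    have he0 : 0 < Real.exp (-2 * ω * (T - s)) := Real.exp_pos _
    have he1 : Real.exp (-2 * ω * (T - s)) ≤ 1 := by
      apply Real.exp_le_one_iff.2; nlinarith
    nlinarith
  set G : ℝ → ℝ := fun s => (α / 2) *
    (-(ω * (T - s)) + Real.log (1 + u) - Real.log (1 + u * Real.exp (-2 * ω * (T - s))))
    with hG
  have hderiv : ∀ s ∈ Set.uIcc t T, HasDerivAt G (y s) s := by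
    intro s hsI
    rw [Set.uIcc_of_le htT] at hsI
    have hsT : s ≤ T := hsI.2
    have hden : 0 < 1 + u * Real.exp (-2 * ω * (T - s)) := hpos s hsT
    have h1 : HasDerivAt (fun s : ℝ => -2 * ω * (T - s)) (2 * ω) s := by
      have := ((hasDerivAt_const s T).sub (hasDerivAt_id s)).const_mul (-2 * ω)
      simpa using this
    have h2 : HasDerivAt (fun s : ℝ => Real.exp (-2 * ω * (T - s)))
        (Real.exp (-2 * ω * (T - s)) * (2 * ω)) s := h1.exp
    have h3 : HasDerivAt (fun s : ℝ => 1 + u * Real.exp (-2 * ω * (T - s)))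
        (u * (Real.exp (-2 * ω * (T - s)) * (2 * ω))) s := by
      exact ((hasDerivAt_const s 1).add (h2.const_mul u)).congr_deriv (by ring)
    have h4 : HasDerivAt (fun s : ℝ => Real.log (1 + u * Real.exp (-2 * ω * (T - s))))
        (u * (Real.exp (-2 * ω * (T - s)) * (2 * ω)) /
          (1 + u * Real.exp (-2 * ω * (T - s)))) s := h3.log hden.ne'
    have h5 : HasDerivAt (fun s : ℝ => -(ω * (T - s))) ω s := by
      have := (((hasDerivAt_const s T).sub (hasDerivAt_id s)).const_mul ω).neg
      exact this.congr_deriv (by ring)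
    have h6 := (((h5.add (hasDerivAt_const s (Real.log (1 + u)))).sub h4).const_mul (α / 2))
    have heq : (α / 2) * ((ω + 0) - u * (Real.exp (-2 * ω * (T - s)) * (2 * ω)) /
        (1 + u * Real.exp (-2 * ω * (T - s)))) = y s := by
      rw [hy s, hαω]
      set E := Real.exp (-2 * ω * (T - s)) with hE
      have hne : 1 + u * E ≠ 0 := hden.ne'
      field_simp
      ring
    exact heq ▸ h6
  have hcont : ContinuousOn y (Set.uIcc t T) := by
    rw [Set.uIcc_of_le htT]
    have hc : ContinuousOn (fun s => Real.sqrt (α * β) / 2 *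
        (1 - u * Real.exp (-2 * ω * (T - s))) / (1 + u * Real.exp (-2 * ω * (T - s))))
        (Set.Icc t T) :=
      ContinuousOn.div (by fun_prop) (by fun_prop) (fun s hsI => (hpos s hsI.2).ne')
    exact hc.congr (fun s _ => hy s)
  have hint : IntervalIntegrable y MeasureTheory.volume t T :=
    hcont.intervalIntegrable
  have hInt : ∫ s in t..T, y s = G T - G t :=
    intervalIntegral.integral_eq_sub_of_hasDerivAt hderiv hint
  have hGT : G T = 0 := by simp [hG]
  have hAt : A t = G t := by rw [hA t, hInt, hGT]; ring
  have hlog : (2 / α) * A t = -(ω * (T - t)) + Real.log (1 + u)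
      - Real.log (1 + u * Real.exp (-2 * ω * (T - t))) := by
    rw [hAt, hG]; field_simp
  rw [hlog, Real.exp_sub, Real.exp_add, Real.exp_log h1u,
    Real.exp_log (hpos t htT)]
  ring_nf
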